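/- Let n ≥ 2, let F be the n×n matrix with F_{i,i+1} = 1 for i = 1,…,n−1 and all other entries 0, and let D be an n×n diagonal matrix. For a permutation matrix P write D_P := P^T D P. Then the average over all n! permutation matrices P satisfies (1/n!)·∑_{P} P ( F D_P − 𝟏 e₂^T D_P + D_P F^T − D_P e₂ 𝟏^T ) P^T = −(2/n)·D. -/

import Mathlib

open Matrix Finset Equiv

/-- The matrix with ones on the superdiagonal. -/
def matF (n : ℕ) : Matrix (Fin n) (Fin n) ℝ :=
  Matrix.of fun i j => if (i : ℕ) + 1 = (j : ℕ) then 1 else 0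

/-- The permutation matrix `P` of `σ`, satisfying `P e_j = e_{σ j}`. -/
def permMat {n : ℕ} (σ : Equiv.Perm (Fin n)) : Matrix (Fin n) (Fin n) ℝ :=
  Matrix.of fun i j => if i = σ j then 1 else 0

lemma permMat_mul_apply {n : ℕ} (σ : Equiv.Perm (Fin n)) (A : Matrix (Fin n) (Fin n) ℝ)
    (i j : Fin n) : (permMat σ * A) i j = A (σ⁻¹ i) j := by
  simp only [permMat, Matrix.mul_apply, Matrix.of_apply]
  simp_rw [← Equiv.symm_apply_eq, ite_mul, one_mul, zero_mul, Finset.sum_ite_eq, Finset.mem_univ,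
    if_pos, Equiv.Perm.inv_def]

lemma mul_permMat_apply {n : ℕ} (σ : Equiv.Perm (Fin n)) (A : Matrix (Fin n) (Fin n) ℝ)
    (i j : Fin n) : (A * permMat σ) i j = A i (σ j) := by
  simp only [permMat, Matrix.mul_apply, Matrix.of_apply]
  simp_rw [mul_ite, mul_one, mul_zero, Finset.sum_ite_eq', Finset.mem_univ, if_pos]

lemma tperm_mul_apply {n : ℕ} (σ : Equiv.Perm (Fin n)) (A : Matrix (Fin n) (Fin n) ℝ)
    (i j : Fin n) : ((permMat σ)ᵀ * A) i j = A (σ i) j := by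
  simp only [permMat, Matrix.mul_apply, Matrix.transpose_apply, Matrix.of_apply]
  simp_rw [ite_mul, one_mul, zero_mul, Finset.sum_ite_eq', Finset.mem_univ, if_pos]

lemma mul_tperm_apply {n : ℕ} (σ : Equiv.Perm (Fin n)) (A : Matrix (Fin n) (Fin n) ℝ)
    (i j : Fin n) : (A * (permMat σ)ᵀ) i j = A i (σ⁻¹ j) := by
  simp only [permMat, Matrix.mul_apply, Matrix.transpose_apply, Matrix.of_apply]
  simp_rw [← Equiv.symm_apply_eq, mul_ite, mul_one, mul_zero, Finset.sum_ite_eq, Finset.mem_univ,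
    if_pos, Equiv.Perm.inv_def]

lemma conj_diag {n : ℕ} (σ : Equiv.Perm (Fin n)) (d : Fin n → ℝ) :
    (permMat σ)ᵀ * Matrix.diagonal d * permMat σ = Matrix.diagonal (fun k => d (σ k)) := by
  ext a b
  rw [mul_permMat_apply, tperm_mul_apply]
  simp [Matrix.diagonal_apply, EmbeddingLike.apply_eq_iff_eq]

set_option maxHeartbeats 1000000 in
lemma summand_apply {n : ℕ} (one : Fin n) (d : Fin n → ℝ) (σ : Equiv.Perm (Fin n))
    (i j : Fin n) :
    (permMat σ *
        (matF n * ((permMat σ)ᵀ * Matrix.diagonal d * permMat σ)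
          - Matrix.vecMulVec (fun _ => 1) (Pi.single one 1) *
              ((permMat σ)ᵀ * Matrix.diagonal d * permMat σ)
          + ((permMat σ)ᵀ * Matrix.diagonal d * permMat σ) * (matF n)ᵀ
          - ((permMat σ)ᵀ * Matrix.diagonal d * permMat σ) *
              Matrix.vecMulVec (Pi.single one 1) (fun _ => 1)) *
        (permMat σ)ᵀ : Matrix (Fin n) (Fin n) ℝ) i j
      = (if ((σ⁻¹ i : ℕ) + 1 = (σ⁻¹ j : ℕ)) then (1:ℝ) else 0) * d j
        - (if σ⁻¹ j = one then (1:ℝ) else 0) * d j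
        + (if ((σ⁻¹ j : ℕ) + 1 = (σ⁻¹ i : ℕ)) then (1:ℝ) else 0) * d i
        - (if σ⁻¹ i = one then (1:ℝ) else 0) * d i := by
  rw [conj_diag, mul_tperm_apply, permMat_mul_apply]
  simp only [Matrix.sub_apply, Matrix.add_apply, Matrix.mul_diagonal, Matrix.diagonal_mul,
    Matrix.transpose_apply, Matrix.vecMulVec_apply, matF, Matrix.of_apply, Pi.single_apply,
    ← Equiv.Perm.mul_apply, mul_inv_cancel, Equiv.Perm.one_apply]
  ring
open Finset Equiv

set_option maxHeartbeats 1000000 in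
lemma fib_const {n : ℕ} (i j : Fin n) (a b c d : Fin n) (hab : a ≠ b) (hcd : c ≠ d) :
    ∑ σ : Equiv.Perm (Fin n), (if σ i = a ∧ σ j = b then (1:ℝ) else 0)
      = ∑ σ : Equiv.Perm (Fin n), (if σ i = c ∧ σ j = d then (1:ℝ) else 0) := by
  have hb'c : Equiv.swap a c b ≠ c := by
    intro h
    exact hab ((Equiv.swap a c).injective (h.trans (Equiv.swap_apply_left a c).symm)).symm
  obtain ⟨ρ, hρa, hρb⟩ : ∃ ρ : Equiv.Perm (Fin n), ρ a = c ∧ ρ b = d := by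
    refine ⟨Equiv.swap (Equiv.swap a c b) d * Equiv.swap a c, ?_, ?_⟩
    · rw [Equiv.Perm.mul_apply, Equiv.swap_apply_left,
        Equiv.swap_apply_of_ne_of_ne (Ne.symm hb'c) hcd]
    · rw [Equiv.Perm.mul_apply, Equiv.swap_apply_left]
  rw [← Equiv.sum_comp (Equiv.mulLeft ρ)
    (fun σ : Equiv.Perm (Fin n) => if σ i = c ∧ σ j = d then (1:ℝ) else 0)]
  refine Finset.sum_congr rfl fun σ _ => ?_
  have h1 : (Equiv.mulLeft ρ σ) i = c ↔ σ i = a := by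
    rw [Equiv.coe_mulLeft, Equiv.Perm.mul_apply, ← hρa, EmbeddingLike.apply_eq_iff_eq]
  have h2 : (Equiv.mulLeft ρ σ) j = d ↔ σ j = b := by
    rw [Equiv.coe_mulLeft, Equiv.Perm.mul_apply, ← hρb, EmbeddingLike.apply_eq_iff_eq]
  rw [if_congr (and_congr h1 h2) rfl rfl]

set_option maxHeartbeats 1000000 in
lemma single_const {n : ℕ} (i : Fin n) (a b : Fin n) :
    ∑ σ : Equiv.Perm (Fin n), (if σ i = a then (1:ℝ) else 0)
      = ∑ σ : Equiv.Perm (Fin n), (if σ i = b then (1:ℝ) else 0) := by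
  have hρa : Equiv.swap a b a = b := Equiv.swap_apply_left a b
  rw [← Equiv.sum_comp (Equiv.mulLeft (Equiv.swap a b))
    (fun σ : Equiv.Perm (Fin n) => if σ i = b then (1:ℝ) else 0)]
  refine Finset.sum_congr rfl fun σ _ => ?_
  have h1 : (Equiv.mulLeft (Equiv.swap a b) σ) i = b ↔ σ i = a := by
    rw [Equiv.coe_mulLeft, Equiv.Perm.mul_apply, Equiv.swap_apply_eq_iff,
      Equiv.swap_apply_right]
  rw [if_congr h1 rfl rfl]

set_option maxHeartbeats 1000000 in
lemma succ_count {n : ℕ} (hn : 2 ≤ n) (i j b : Fin n) (hij : i ≠ j) :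
    ∑ σ : Equiv.Perm (Fin n), (if (σ i : ℕ) + 1 = (σ j : ℕ) then (1:ℝ) else 0)
      = ∑ σ : Equiv.Perm (Fin n), (if σ j = b then (1:ℝ) else 0) := by
  have h01 : (⟨0, by omega⟩ : Fin n) ≠ ⟨1, by omega⟩ := by simp [Fin.ext_iff]
  set K : ℝ := ∑ σ : Equiv.Perm (Fin n),
    (if σ i = ⟨0, by omega⟩ ∧ σ j = ⟨1, by omega⟩ then (1:ℝ) else 0) with hK
  have lhs1 : ∀ σ : Equiv.Perm (Fin n), (if (σ i : ℕ) + 1 = (σ j : ℕ) then (1:ℝ) else 0)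
      = ∑ a : Fin n, (if σ i = a ∧ (a : ℕ) + 1 = (σ j : ℕ) then (1:ℝ) else 0) := by
    intro σ
    simp_rw [ite_and, Finset.sum_ite_eq, Finset.mem_univ, if_pos]
  have rhs1 : ∀ σ : Equiv.Perm (Fin n), (if σ j = b then (1:ℝ) else 0)
      = ∑ a : Fin n, (if σ i = a ∧ σ j = b then (1:ℝ) else 0) := by
    intro σ
    simp_rw [ite_and, Finset.sum_ite_eq, Finset.mem_univ, if_pos]
  rw [Finset.sum_congr rfl fun σ _ => lhs1 σ, Finset.sum_congr rfl fun σ _ => rhs1 σ]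
  rw [Finset.sum_comm]
  conv_rhs => rw [Finset.sum_comm]
  have lhs2 : ∀ a : Fin n,
      (∑ σ : Equiv.Perm (Fin n), (if σ i = a ∧ (a : ℕ) + 1 = (σ j : ℕ) then (1:ℝ) else 0))
        = if (a : ℕ) + 1 < n then K else 0 := by
    intro a
    by_cases h : (a : ℕ) + 1 < n
    · rw [if_pos h, hK]
      have : ∀ σ : Equiv.Perm (Fin n),
          (σ i = a ∧ (a : ℕ) + 1 = (σ j : ℕ)) ↔ (σ i = a ∧ σ j = ⟨(a:ℕ)+1, h⟩) := by
        intro σ; constructor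
        · rintro ⟨h1, h2⟩; exact ⟨h1, by simp [Fin.ext_iff, h2.symm]⟩
        · rintro ⟨h1, h2⟩; exact ⟨h1, by simp [h2]⟩
      rw [Finset.sum_congr rfl fun σ _ => if_congr (this σ) rfl rfl]
      exact fib_const i j a ⟨(a:ℕ)+1, h⟩ _ _ (by simp [Fin.ext_iff]) h01
    · rw [if_neg h]
      refine Finset.sum_eq_zero fun σ _ => ?_
      have : ¬((a : ℕ) + 1 = (σ j : ℕ)) := by have := (σ j).isLt; omega
      simp [this]
  have rhs2 : ∀ a : Fin n,
      (∑ σ : Equiv.Perm (Fin n), (if σ i = a ∧ σ j = b then (1:ℝ) else 0))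
        = if a = b then 0 else K := by
    intro a
    by_cases h : a = b
    · rw [if_pos h]
      refine Finset.sum_eq_zero fun σ _ => ?_
      by_cases h1 : σ i = a
      · have : σ j ≠ b := by
          rw [← h, ← h1]; exact fun hc => hij (σ.injective hc.symm)
        simp [this]
      · simp [h1]
    · rw [if_neg h, hK]
      exact fib_const i j a b _ _ h h01
  rw [Finset.sum_congr rfl fun a _ => lhs2 a, Finset.sum_congr rfl fun a _ => rhs2 a]
  have cardL : (univ.filter (fun a : Fin n => (a : ℕ) + 1 < n)).card = n - 1 := by
    have : univ.filter (fun a : Fin n => (a : ℕ) + 1 < n)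
        = univ.erase (⟨n - 1, by omega⟩ : Fin n) := by
      ext a
      simp only [Finset.mem_filter, Finset.mem_univ, true_and, Finset.mem_erase, Ne,
        Fin.ext_iff, Fin.val_mk, and_true]
      have := a.isLt
      omega
    rw [this, Finset.card_erase_of_mem (Finset.mem_univ _), Finset.card_univ, Fintype.card_fin]
  have cardR : (univ.filter (fun a : Fin n => ¬ a = b)).card = n - 1 := by
    rw [Finset.filter_ne' univ b, Finset.card_erase_of_mem (Finset.mem_univ _),
      Finset.card_univ, Fintype.card_fin]
  calc ∑ a : Fin n, (if (a : ℕ) + 1 < n then K else 0)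
      = ∑ a ∈ univ.filter (fun a : Fin n => (a : ℕ) + 1 < n), K :=
        (Finset.sum_filter _ _).symm
    _ = (n - 1) • K := by rw [Finset.sum_const, cardL]
    _ = ∑ a ∈ univ.filter (fun a : Fin n => ¬ a = b), K := by
        rw [Finset.sum_const, cardR]
    _ = ∑ a : Fin n, (if ¬ a = b then K else 0) := Finset.sum_filter _ _
    _ = ∑ a : Fin n, (if a = b then 0 else K) := by simp_rw [ite_not]

lemma sum_perm_inv {n : ℕ} (f : Equiv.Perm (Fin n) → ℝ) :
    ∑ σ : Equiv.Perm (Fin n), f σ⁻¹ = ∑ σ : Equiv.Perm (Fin n), f σ :=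
  Equiv.sum_comp (Equiv.inv (Equiv.Perm (Fin n))) f

set_option maxHeartbeats 1000000 in
lemma single_count {n : ℕ} (i b : Fin n) :
    (n : ℝ) * ∑ σ : Equiv.Perm (Fin n), (if σ i = b then (1:ℝ) else 0)
      = (n.factorial : ℝ) := by
  calc (n : ℝ) * ∑ σ : Equiv.Perm (Fin n), (if σ i = b then (1:ℝ) else 0)
      = ∑ a : Fin n, ∑ σ : Equiv.Perm (Fin n), (if σ i = b then (1:ℝ) else 0) := by
        rw [Finset.sum_const, Finset.card_univ, Fintype.card_fin, nsmul_eq_mul]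
    _ = ∑ a : Fin n, ∑ σ : Equiv.Perm (Fin n), (if σ i = a then (1:ℝ) else 0) :=
        Finset.sum_congr rfl fun a _ => single_const i b a
    _ = ∑ σ : Equiv.Perm (Fin n), ∑ a : Fin n, (if σ i = a then (1:ℝ) else 0) :=
        Finset.sum_comm
    _ = ∑ σ : Equiv.Perm (Fin n), (1:ℝ) := by
        refine Finset.sum_congr rfl fun σ _ => ?_
        simp_rw [Finset.sum_ite_eq, Finset.mem_univ, if_pos]
    _ = (n.factorial : ℝ) := by
        rw [Finset.sum_const, Finset.card_univ, Fintype.card_perm, Fintype.card_fin,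
          nsmul_eq_mul, mul_one]

set_option maxHeartbeats 1000000 in
theorem average_deltaD_term (n : ℕ) (hn : 2 ≤ n) (d : Fin n → ℝ) :
    ((n.factorial : ℝ))⁻¹ •
        ∑ σ : Equiv.Perm (Fin n),
          permMat σ *
            (matF n * ((permMat σ)ᵀ * Matrix.diagonal d * permMat σ)
              - Matrix.vecMulVec (fun _ => 1) (Pi.single (⟨1, by omega⟩ : Fin n) 1) *
                  ((permMat σ)ᵀ * Matrix.diagonal d * permMat σ)
              + ((permMat σ)ᵀ * Matrix.diagonal d * permMat σ) * (matF n)ᵀ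
              - ((permMat σ)ᵀ * Matrix.diagonal d * permMat σ) *
                  Matrix.vecMulVec (Pi.single (⟨1, by omega⟩ : Fin n) 1) (fun _ => 1)) *
            (permMat σ)ᵀ
      = (-(2 / (n : ℝ))) • Matrix.diagonal d := by
  have hnne : (n : ℝ) ≠ 0 := by
    have : 0 < n := by omega
    exact_mod_cast this.ne'
  have hfacne : ((n.factorial : ℝ)) ≠ 0 := by
    exact_mod_cast n.factorial_ne_zero
  set one : Fin n := ⟨1, by omega⟩ with hone
  ext i j
  rw [Matrix.smul_apply, Matrix.sum_apply, Matrix.smul_apply, smul_eq_mul, smul_eq_mul]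
  rw [Finset.sum_congr rfl fun σ _ => summand_apply one d σ i j]
  rw [Finset.sum_sub_distrib, Finset.sum_add_distrib, Finset.sum_sub_distrib,
    ← Finset.sum_mul, ← Finset.sum_mul, ← Finset.sum_mul, ← Finset.sum_mul]
  have e1 : ∑ σ : Equiv.Perm (Fin n), (if ((σ⁻¹ i : ℕ) + 1 = (σ⁻¹ j : ℕ)) then (1:ℝ) else 0)
      = ∑ σ : Equiv.Perm (Fin n), (if ((σ i : ℕ) + 1 = (σ j : ℕ)) then (1:ℝ) else 0) :=
    sum_perm_inv fun σ => if ((σ i : ℕ) + 1 = (σ j : ℕ)) then (1:ℝ) else 0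
  have e2 : ∑ σ : Equiv.Perm (Fin n), (if σ⁻¹ j = one then (1:ℝ) else 0)
      = ∑ σ : Equiv.Perm (Fin n), (if σ j = one then (1:ℝ) else 0) :=
    sum_perm_inv fun σ => if σ j = one then (1:ℝ) else 0
  have e3 : ∑ σ : Equiv.Perm (Fin n), (if ((σ⁻¹ j : ℕ) + 1 = (σ⁻¹ i : ℕ)) then (1:ℝ) else 0)
      = ∑ σ : Equiv.Perm (Fin n), (if ((σ j : ℕ) + 1 = (σ i : ℕ)) then (1:ℝ) else 0) :=
    sum_perm_inv fun σ => if ((σ j : ℕ) + 1 = (σ i : ℕ)) then (1:ℝ) else 0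
  have e4 : ∑ σ : Equiv.Perm (Fin n), (if σ⁻¹ i = one then (1:ℝ) else 0)
      = ∑ σ : Equiv.Perm (Fin n), (if σ i = one then (1:ℝ) else 0) :=
    sum_perm_inv fun σ => if σ i = one then (1:ℝ) else 0
  rw [e1, e2, e3, e4]
  by_cases hij : i = j
  · subst hij
    have z1 : ∑ σ : Equiv.Perm (Fin n), (if ((σ i : ℕ) + 1 = (σ i : ℕ)) then (1:ℝ) else 0)
        = 0 := Finset.sum_eq_zero fun σ _ => by simp
    rw [z1]
    have hS : ∑ σ : Equiv.Perm (Fin n), (if σ i = one then (1:ℝ) else 0)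
        = (n.factorial : ℝ) / n := by
      rw [eq_div_iff hnne]
      linarith [single_count i one]
    rw [hS, Matrix.diagonal_apply_eq]
    field_simp
    ring
  · rw [succ_count hn i j one hij, succ_count hn j i one (Ne.symm hij),
      Matrix.diagonal_apply_ne _ hij, mul_zero]
    ring
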